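/- arXiv:1508.03128 — 3 statements merged into one kernel-verified Lean document; each statement's English description precedes it below -/
import Mathlib

section
/- Let G be a group and E ⊆ G^n an algebraic set, i.e., E = V(S) for some S ⊆ F_n where V(S) = {a ∈ G^n : ∀ w ∈ S, w(a) = 1}. If Rad(E) is a fully invariant subgroup of F_n, then E = ⋃_{a ∈ E} K(a)^n, where K(a) is the subgroup of G generated by a₁,…,aₙ. -/
/-- Evaluation of a word of the free group on `n` generators at a tuple `a : Fin n → G`. -/
def wEval {G : Type*} [Group G] {n : ℕ} (a : Fin n → G) : FreeGroup (Fin n) →* G :=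
  FreeGroup.lift a

/-- The radical of a subset `E ⊆ G^n`. -/
def Rad {G : Type*} [Group G] {n : ℕ} (E : Set (Fin n → G)) : Set (FreeGroup (Fin n)) :=
  {w | ∀ a ∈ E, wEval a w = 1}

/-- The algebraic set defined by a system of equations `S ⊆ F_n`. -/
def Vset (G : Type*) [Group G] {n : ℕ} (S : Set (FreeGroup (Fin n))) : Set (Fin n → G) :=
  {a | ∀ w ∈ S, wEval a w = 1}

/-- The "cube" `K^n` of a subgroup `K ≤ G`: tuples with all entries in `K`. -/
def cube {G : Type*} [Group G] (n : ℕ) (K : Subgroup G) : Set (Fin n → G) :=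
  {a | ∀ i, a i ∈ K}

/-- A set of words is fully invariant if it is stable under every endomorphism of `F_n`. -/
def FullyInvariant {n : ℕ} (H : Set (FreeGroup (Fin n))) : Prop :=
  ∀ α : FreeGroup (Fin n) →* FreeGroup (Fin n), ∀ w ∈ H, α w ∈ H

/-- A subgroup is `n`-generated if it is the closure of at most `n` elements. -/
def NGenerated {G : Type*} [Group G] (n : ℕ) (K : Subgroup G) : Prop :=
  ∃ s : Finset G, s.card ≤ n ∧ K = Subgroup.closure (s : Set G)

theorem algebraic_eq_union_of_fullyInvariant {G : Type*} [Group G] {n : ℕ}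
    (E : Set (Fin n → G)) (halg : ∃ S : Set (FreeGroup (Fin n)), E = Vset G S)
    (hfi : FullyInvariant (Rad E)) :
    E = ⋃ a ∈ E, cube n (Subgroup.closure (Set.range a)) := by
  obtain ⟨S, rfl⟩ := halg
  ext b
  constructor
  · intro hb
    exact Set.mem_biUnion hb (fun i => Subgroup.subset_closure ⟨i, rfl⟩)
  · intro hb
    obtain ⟨_, ⟨a, rfl⟩, _, ⟨ha, rfl⟩, hbc⟩ := hb
    have hv : ∀ i, ∃ v : FreeGroup (Fin n), wEval a v = b i := by
      intro i
      have := hbc i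
      rw [← FreeGroup.range_lift_eq_closure] at this
      exact this
    choose v hv using hv
    set α : FreeGroup (Fin n) →* FreeGroup (Fin n) := FreeGroup.lift v with hα
    have hcomp : ∀ w, wEval a (α w) = wEval b w := by
      intro w
      have : (wEval a).comp α = wEval b := by
        apply FreeGroup.ext_hom
        intro i
        simpa [hα, wEval] using hv i
      exact DFunLike.congr_fun this w
    intro w hw
    have hwr : w ∈ Rad (Vset G S) := fun c hc => hc w hw
    have := hfi α w hwr
    rw [← hcomp w]
    exact this a ha
end

section
/- Let G be a group and E ⊆ G^n an algebraic set. Then Rad(E) is a fully invariant subgroup of F_n if and only if there exists a family {Kᵢ} of n-generated subgroups of G with E = ⋃ᵢ Kᵢ^n. -/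
theorem rad_fullyInvariant_iff {G : Type*} [Group G] {n : ℕ}
    (E : Set (Fin n → G)) (halg : ∃ S : Set (FreeGroup (Fin n)), E = Vset G S) :
    FullyInvariant (Rad E) ↔
      ∃ 𝔎 : Set (Subgroup G), (∀ K ∈ 𝔎, NGenerated n K) ∧ E = ⋃ K ∈ 𝔎, cube n K := by
  constructor
  · intro hFI
    obtain ⟨S, hS⟩ := halg
    refine ⟨{K | ∃ a ∈ E, K = Subgroup.closure (Set.range a)}, ?_, ?_⟩
    · rintro K ⟨a, -, rfl⟩
      classical
      refine ⟨Finset.univ.image a, le_trans (Finset.card_image_le) (by simp), ?_⟩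
      rw [Finset.coe_image, Finset.coe_univ, Set.image_univ]
    · ext b
      constructor
      · intro hb
        refine Set.mem_iUnion₂.2 ⟨Subgroup.closure (Set.range b), ⟨b, hb, rfl⟩, ?_⟩
        intro i
        exact Subgroup.subset_closure ⟨i, rfl⟩
      · intro hb
        obtain ⟨K, ⟨a, ha, rfl⟩, hbK⟩ := Set.mem_iUnion₂.1 hb
        -- each b i is in the range of wEval a
        have hbi : ∀ i, ∃ u, wEval a u = b i := by
          intro i
          have : b i ∈ (FreeGroup.lift a).range := by
            rw [FreeGroup.range_lift_eq_closure]
            exact hbK i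
          exact this
        choose u hu using hbi
        set α : FreeGroup (Fin n) →* FreeGroup (Fin n) := FreeGroup.lift u with hα
        have key : wEval b = (wEval a).comp α := by
          apply FreeGroup.ext_hom
          intro i
          simp only [wEval, MonoidHom.comp_apply, hα, FreeGroup.lift_apply_of]
          exact (hu i).symm
        rw [hS]
        intro w hwS
        have hwRad : w ∈ Rad E := by
          intro c hc
          rw [hS] at hc
          exact hc w hwS
        have := hFI α w hwRad a ha
        have : wEval a (α w) = 1 := this
        calc wEval b w = (wEval a).comp α w := by rw [key]
          _ = 1 := this
  · rintro ⟨𝔎, -, hE⟩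
    intro α w hw a ha
    set b : Fin n → G := fun i => wEval a (α (FreeGroup.of i)) with hb
    have key : (wEval a).comp α = wEval b := by
      apply FreeGroup.ext_hom
      intro i
      simp [wEval, hb]
    have hbE : b ∈ E := by
      rw [hE] at ha ⊢
      obtain ⟨K, hK, haK⟩ := Set.mem_iUnion₂.1 ha
      refine Set.mem_iUnion₂.2 ⟨K, hK, fun i => ?_⟩
      have hrange : (wEval a).range ≤ K := by
        rw [wEval, FreeGroup.range_lift_eq_closure]
        exact (Subgroup.closure_le K).2 (by rintro x ⟨i, rfl⟩; exact haK i)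
      exact hrange ⟨α (FreeGroup.of i), rfl⟩
    show wEval a (α w) = 1
    calc wEval a (α w) = (wEval a).comp α w := rfl
      _ = wEval b w := by rw [key]
      _ = 1 := hw b hbE
end

section
/- Let G be a group and S ⊆ F_n a system of equations. If Rad_G(S) := Rad(V(S)) is a fully invariant subgroup of F_n, then there is a family 𝔛 of n-generated subgroups of G such that Rad_G(S) equals the set of all w ∈ F_n that are identities of every K ∈ 𝔛 (i.e., w(k₁,…,kₙ)=1 for all k₁,…,kₙ ∈ K, for every K ∈ 𝔛). -/
theorem rad_eq_identities_of_family {G : Type*} [Group G] {n : ℕ}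
    (S : Set (FreeGroup (Fin n))) (hfi : FullyInvariant (Rad (Vset G S))) :
    ∃ 𝔛 : Set (Subgroup G), (∀ K ∈ 𝔛, NGenerated n K) ∧
      Rad (Vset G S) = {w : FreeGroup (Fin n) |
        ∀ K ∈ 𝔛, ∀ a : Fin n → G, (∀ i, a i ∈ K) → wEval a w = 1} := by

  refine ⟨{K | ∃ a ∈ Vset G S, K = Subgroup.closure (Set.range a)}, ?_, ?_⟩
  · rintro K ⟨a, _, rfl⟩
    classical
    refine ⟨Finset.univ.image a, ?_, ?_⟩
    · exact (Finset.card_image_le).trans (by simp)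
    · congr 1
      ext x
      simp [Set.range, eq_comm]
  · ext w
    constructor
    · intro hw K hK b hb
      obtain ⟨a, ha, rfl⟩ := hK
      have hrange : ∀ i, b i ∈ (FreeGroup.lift a).range := by
        intro i
        rw [FreeGroup.range_lift_eq_closure]
        exact hb i
      choose u hu using hrange
      have key : wEval b w = wEval a ((FreeGroup.lift u) w) := by
        have : wEval b = (wEval a).comp (FreeGroup.lift u) := by
          apply FreeGroup.ext_hom
          intro i
          simp [wEval, hu]
        rw [this]; rfl
      rw [key]
      exact hfi (FreeGroup.lift u) w hw a ha
    · intro hw a ha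
      exact hw (Subgroup.closure (Set.range a)) ⟨a, ha, rfl⟩ a
        (fun i => Subgroup.subset_closure ⟨i, rfl⟩)
end
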